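/- Let φ be a rank two Drinfeld module over (L, γ) with [L : F_q] = n, and let T² - A·T + B be the characteristic polynomial of its Frobenius endomorphism τ^n, so that τ^{2n} - φ(A)τ^n + φ(B) = 0 in L⟨τ⟩. Then the polynomial 1 - A + B ∈ F_q[x] annihilates the F_q-linear endomorphism Φ_x = γ(x)·Id + g·π + Δ·π² of L, i.e., (1 - A + B)(Φ_x) = 0. -/
import Mathlib


/-- An abstract model of the skew polynomial ring `L⟨τ⟩` with the commutation rule
`τ u = u ^ q τ`: a ring `S` with a coefficient embedding `C : L →+* S`, a
distinguished element `tau`, and a coefficient function giving, for every element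
of `S`, its (unique, by `indep`) representation as `∑ C (u_i) * tau ^ i`. -/
structure SkewPolyRing (q : ℕ) (L : Type*) [Field L] (S : Type*) [Ring S] where
  C : L →+* S
  tau : S
  tau_comm : ∀ u : L, tau * C u = C (u ^ q) * tau
  coeff : S → (ℕ →₀ L)
  sum_coeff : ∀ U : S, ((coeff U).sum fun i a => C a * tau ^ i) = U
  indep : ∀ f : ℕ →₀ L, ((f.sum fun i a => C a * tau ^ i) = 0) → f = 0

namespace SkewPolyRing

variable {q : ℕ} {L S : Type*} [Field L] [Ring S]

/-- The degree of a skew polynomial (`⊥` for `0`). -/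
noncomputable def degree (P : SkewPolyRing q L S) (U : S) : WithBot ℕ :=
  (P.coeff U).support.max

variable (P : SkewPolyRing q L S)

theorem sum_inj {f g : ℕ →₀ L}
    (h : (f.sum fun i a => P.C a * P.tau ^ i) = g.sum fun i a => P.C a * P.tau ^ i) :
    f = g := by
  have h0 : ((f - g).sum fun i a => P.C a * P.tau ^ i) = 0 := by
    rw [Finsupp.sum_sub_index (fun i a b => by rw [map_sub, sub_mul]), h, sub_self]
  exact sub_eq_zero.mp (P.indep _ h0)

theorem coeff_sum (f : ℕ →₀ L) :
    P.coeff (f.sum fun i a => P.C a * P.tau ^ i) = f :=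
  P.sum_inj (P.sum_coeff _)

theorem coeff_monomial (i : ℕ) (a : L) :
    P.coeff (P.C a * P.tau ^ i) = Finsupp.single i a := by
  have h : ((Finsupp.single i a).sum fun j b => P.C b * P.tau ^ j) = P.C a * P.tau ^ i :=
    Finsupp.sum_single_index (by simp)
  rw [← h, coeff_sum]

theorem coeff_zero : P.coeff (0 : S) = 0 := by
  have := P.coeff_monomial 0 0
  simpa using this

theorem coeff_add (U V : S) : P.coeff (U + V) = P.coeff U + P.coeff V := by
  apply P.sum_inj
  rw [Finsupp.sum_add_index' (fun i => by simp) (fun i a b => by rw [map_add, add_mul]),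
    P.sum_coeff, P.sum_coeff, P.sum_coeff]

/-- Evaluation of a skew polynomial as a function on `L`, sending `τ` to `v ↦ v ^ q`. -/
noncomputable def Efun (U : S) (v : L) : L :=
  (P.coeff U).sum fun i a => a * v ^ q ^ i

/-- `Efun` bundled as an additive monoid hom into `L → L`. -/
noncomputable def EfunHom : S →+ (L → L) where
  toFun U := P.Efun U
  map_zero' := by
    funext v
    simp [Efun, P.coeff_zero]
  map_add' U V := by
    funext v
    simp only [Efun, P.coeff_add, Pi.add_apply]
    exact Finsupp.sum_add_index' (fun i => by simp) (fun i a b => by rw [add_mul])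

theorem Efun_def (U : S) (v : L) :
    P.Efun U v = (P.coeff U).sum fun i a => a * v ^ q ^ i := rfl

theorem Efun_monomial (i : ℕ) (a : L) (v : L) :
    P.Efun (P.C a * P.tau ^ i) v = a * v ^ q ^ i := by
  rw [Efun, coeff_monomial, Finsupp.sum_single_index (by simp)]

theorem EfunHom_apply (U : S) : P.EfunHom U = P.Efun U := rfl

theorem Efun_finsupp_sum {ι M : Type*} [AddCommMonoid M] (f : ι →₀ M) (g : ι → M → S) (v : L) :
    P.Efun (f.sum g) v = f.sum fun j b => P.Efun (g j b) v := by
  have h := map_finsuppSum P.EfunHom f g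
  have h2 := congrFun h v
  simp only [EfunHom_apply, Finsupp.sum, Finset.sum_apply] at h2
  exact h2

theorem tau_pow_C (i : ℕ) (b : L) :
    P.tau ^ i * P.C b = P.C (b ^ q ^ i) * P.tau ^ i := by
  induction i generalizing b with
  | zero => simp
  | succ i ih =>
    rw [pow_succ', mul_assoc, ih b, ← mul_assoc, P.tau_comm, ← pow_mul, ← pow_succ, mul_assoc,
      ← pow_succ']

theorem Efun_mul {p m : ℕ} (hp : p.Prime) [CharP L p] (hm : q = p ^ m)
    (U V : S) (v : L) : P.Efun (U * V) v = P.Efun U (P.Efun V v) := by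
  haveI : Fact p.Prime := ⟨hp⟩
  have hqpi : ∀ (i : ℕ) (x : L), x ^ q ^ i = iterateFrobenius L p (m * i) x := by
    intro i x
    rw [iterateFrobenius_def, hm, ← pow_mul]
  have key : ∀ (i : ℕ) (a : L) (W : S),
      P.Efun (P.C a * P.tau ^ i * W) v = a * (P.Efun W v) ^ q ^ i := by
    intro i a W
    conv_lhs => rw [← P.sum_coeff W, Finsupp.mul_sum, P.Efun_finsupp_sum]
    conv_rhs => rw [P.Efun_def, hqpi, map_finsuppSum, Finsupp.mul_sum]
    apply Finsupp.sum_congr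
    intro j _
    have hmono : P.C a * P.tau ^ i * (P.C ((P.coeff W) j) * P.tau ^ j)
        = P.C (a * ((P.coeff W) j) ^ q ^ i) * P.tau ^ (i + j) := by
      calc P.C a * P.tau ^ i * (P.C ((P.coeff W) j) * P.tau ^ j)
          = P.C a * ((P.tau ^ i * P.C ((P.coeff W) j)) * P.tau ^ j) := by
            rw [mul_assoc, ← mul_assoc (P.tau ^ i)]
        _ = P.C a * (P.C (((P.coeff W) j) ^ q ^ i) * (P.tau ^ i * P.tau ^ j)) := by
            rw [P.tau_pow_C, mul_assoc]
        _ = P.C (a * ((P.coeff W) j) ^ q ^ i) * P.tau ^ (i + j) := by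
            rw [map_mul, pow_add, mul_assoc]
    rw [hmono, P.Efun_monomial, ← hqpi, mul_pow, pow_add, mul_comm (q ^ i) (q ^ j), pow_mul]
    ring
  conv_lhs => rw [← P.sum_coeff U, Finsupp.sum_mul, P.Efun_finsupp_sum]
  conv_rhs => rw [P.Efun_def]
  apply Finsupp.sum_congr
  intro i _
  exact key i _ V

end SkewPolyRing

/-- if `τ^{2n} - φ(A) τ^n + φ(B) = 0` in `L⟨τ⟩` (with
`deg A ≤ n/2`, `deg B = n`), then the polynomial `1 - A + B ∈ F_q[x]`
annihilates the `F_q`-linear endomorphism `Φ_x = γ(x)·Id + g·π + Δ·π²` of `L`,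
where annihilation is expressed pointwise on `L`. -/
theorem one_sub_A_add_B_annihilates_Phi_x
    (p q n : ℕ) (Fq L S : Type*) [Field Fq] [Fintype Fq] [Field L] [Fintype L]
    [Algebra Fq L] [FiniteDimensional Fq L] [Ring S] (hp : p.Prime) [CharP L p]
    (hq : q = Fintype.card Fq) (hn : Module.finrank Fq L = n)
    (P : SkewPolyRing q L S)
    (c g Δ : L) (hΔ : Δ ≠ 0)
    (γ : Polynomial Fq →+* L) (hc : c = γ Polynomial.X)
    (φ : Polynomial Fq →+* S)
    (hconst : ∀ a : Fq, φ (Polynomial.C a) = P.C (algebraMap Fq L a))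
    (hX : φ Polynomial.X = P.C c + P.C g * P.tau + P.C Δ * P.tau ^ 2)
    (A B : Polynomial Fq) (hA : 2 * A.natDegree ≤ n) (hB : B.natDegree = n)
    (hchar : P.tau ^ (2 * n) - φ A * P.tau ^ n + φ B = 0)
    (Φ : L → L) (hΦ : ∀ v : L, Φ v = c * v + g * v ^ q + Δ * v ^ q ^ 2) :
    ∀ v : L, ∑ i ∈ Finset.range ((1 - A + B).natDegree + 1),
      algebraMap Fq L ((1 - A + B).coeff i) * Φ^[i] v = 0 := by
  intro v
  haveI : CharP Fq p := (algebraMap Fq L).charP (algebraMap Fq L).injective p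
  obtain ⟨m, -, hm⟩ := FiniteField.card Fq p
  have hqm : q = p ^ (m : ℕ) := by rw [hq, hm]
  have Emul := fun U V w => P.Efun_mul hp hqm U V w
  have hcardL : Fintype.card L = q ^ n := by rw [hq, ← hn]; exact Module.card_eq_pow_finrank
  have hpow_n : ∀ w : L, w ^ q ^ n = w := by
    intro w; rw [← hcardL]; exact FiniteField.pow_card w
  have hEtau : ∀ (k : ℕ) (w : L), P.Efun (P.tau ^ k) w = w ^ q ^ k := by
    intro k w
    have h1 : P.C (1 : L) * P.tau ^ k = P.tau ^ k := by simp
    rw [← h1, P.Efun_monomial, one_mul]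
  have hEone : ∀ w : L, P.Efun (1 : S) w = w := by
    intro w
    have h1 : (1 : S) = P.tau ^ 0 := by simp
    rw [h1, hEtau]; simp
  have hEC : ∀ u w : L, P.Efun (P.C u) w = u * w := by
    intro u w
    have h1 : P.C u * P.tau ^ 0 = P.C u := by simp
    rw [← h1, P.Efun_monomial]; simp
  have hEsub : ∀ (U V : S) (w : L), P.Efun (U - V) w = P.Efun U w - P.Efun V w := by
    intro U V w
    have := congrFun (map_sub P.EfunHom U V) w
    simpa [SkewPolyRing.EfunHom] using this
  have hEadd : ∀ (U V : S) (w : L), P.Efun (U + V) w = P.Efun U w + P.Efun V w := by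
    intro U V w
    have := congrFun (map_add P.EfunHom U V) w
    simpa [SkewPolyRing.EfunHom] using this
  have hB' : φ B = φ A * P.tau ^ n - P.tau ^ (2 * n) := by
    have h := hchar
    rw [sub_add_eq_add_sub, sub_eq_zero] at h
    rw [eq_sub_iff_add_eq, add_comm]
    exact h
  have hEtau2n : P.Efun (P.tau ^ (2 * n)) v = v := by
    rw [hEtau, two_mul, pow_add, pow_mul, hpow_n, hpow_n]
  have hEB : P.Efun (φ B) v = P.Efun (φ A) v - v := by
    rw [hB', hEsub, Emul, hEtau, hpow_n, hEtau2n]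
  have hEφX : ∀ w : L, P.Efun (φ Polynomial.X) w = Φ w := by
    intro w
    have hg : P.C g * P.tau = P.C g * P.tau ^ 1 := by rw [pow_one]
    rw [hX, hEadd, hEadd, hEC, hg, P.Efun_monomial, P.Efun_monomial, hΦ, pow_one]
  have hiter : ∀ (i : ℕ) (w : L), Φ^[i] w = P.Efun (φ (Polynomial.X ^ i)) w := by
    intro i
    induction i with
    | zero => intro w; simp [hEone w]
    | succ i ih =>
      intro w
      rw [Function.iterate_succ_apply', pow_succ', map_mul, Emul, hEφX, ih]
  have hterm : ∀ i ∈ Finset.range ((1 - A + B).natDegree + 1),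
      algebraMap Fq L ((1 - A + B).coeff i) * Φ^[i] v
        = P.Efun (φ (Polynomial.C ((1 - A + B).coeff i) * Polynomial.X ^ i)) v := by
    intro i _
    rw [map_mul, Emul, hconst, hEC, hiter]
  rw [Finset.sum_congr rfl hterm]
  have hsum : ∑ i ∈ Finset.range ((1 - A + B).natDegree + 1),
      P.Efun (φ (Polynomial.C ((1 - A + B).coeff i) * Polynomial.X ^ i)) v
      = P.Efun (φ (∑ i ∈ Finset.range ((1 - A + B).natDegree + 1),
          Polynomial.C ((1 - A + B).coeff i) * Polynomial.X ^ i)) v := by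
    rw [map_sum φ]
    have h2 := congrFun (map_sum P.EfunHom
      (fun i => φ (Polynomial.C ((1 - A + B).coeff i) * Polynomial.X ^ i))
      (Finset.range ((1 - A + B).natDegree + 1))) v
    simp only [SkewPolyRing.EfunHom_apply, Finset.sum_apply] at h2
    exact h2.symm
  rw [hsum]
  have hQ : (∑ i ∈ Finset.range ((1 - A + B).natDegree + 1),
      Polynomial.C ((1 - A + B).coeff i) * Polynomial.X ^ i) = 1 - A + B := by
    conv_rhs => rw [Polynomial.as_sum_range' (1 - A + B) _ (Nat.lt_succ_self _)]
    exact Finset.sum_congr rfl fun i _ => Polynomial.C_mul_X_pow_eq_monomial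
  rw [hQ, map_add, map_sub, map_one, hEadd, hEsub, hEone, hEB]
  ring
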